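/- arXiv:1511.09298 — 2 statements merged into one kernel-verified Lean document; each statement's English description precedes it below -/
import Mathlib

section
/- Let x > 0 be fixed, let c : ℝ₊ → ℝ satisfy limsup_{y→∞} c(y)²/y < ∞, and let K_N(t,x) be the generalized Post-Widder kernel. Then for each δ ∈ (0,1) there exist N₀ ∈ ℕ and a constant C > 0 (independent of N) such that for all N > N₀ and r ∈ {0,1,2}: ∫_{|t−1|≥δ, t≥0} t^r · |K_N(t,x)| dt ≤ C · exp(N·(ln(1+δ) − δ)/8). -/
open MeasureTheory

/-- `1 - b/a ≤ log a - log b` for positive `a,b`. -/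
lemma log_diff_lower {a b : ℝ} (ha : 0 < a) (hb : 0 < b) :
    1 - b / a ≤ Real.log a - Real.log b := by
  have h := Real.log_le_sub_one_of_pos (show (0:ℝ) < b / a from div_pos hb ha)
  rw [Real.log_div hb.ne' ha.ne'] at h
  linarith

/-- Uniform bound for `log t - t` away from `t = 1`. -/
lemma kernel_exponent_bound {δ t : ℝ} (hδ0 : 0 < δ) (hδ1 : δ < 1)
    (ht : 0 < t) (hsep : δ ≤ |t - 1|) :
    Real.log t - t ≤ -1 - (δ - Real.log (1 + δ)) / 4 := by
  have h1δ : (0:ℝ) < 1 + δ := by linarith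
  have hlog1 : Real.log (1 + δ) ≤ δ := by
    have := Real.log_le_sub_one_of_pos h1δ; linarith
  rcases le_abs.mp hsep with h | h
  · -- right side : t ≥ 1 + δ
    have htδ : 1 + δ ≤ t := by linarith
    have h1 : Real.log t - Real.log (1 + δ) ≤ t / (1 + δ) - 1 := by
      have h2 := Real.log_le_sub_one_of_pos (show (0:ℝ) < t / (1 + δ) from div_pos ht h1δ)
      rw [Real.log_div ht.ne' h1δ.ne'] at h2; linarith
    have h2 : t / (1 + δ) ≤ t - δ := by
      rw [div_le_iff₀ h1δ]; nlinarith
    linarith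
  · -- left side : t ≤ 1 - δ
    have ht1 : t ≤ 1 - δ := by linarith
    have h1δ' : (0:ℝ) < 1 - δ := by linarith
    have h1δ2 : (0:ℝ) < 1 - δ / 2 := by linarith
    -- step A : log t - t ≤ log (1-δ) - (1-δ)
    have hA : (1 - δ) - t ≤ Real.log (1 - δ) - Real.log t := by
      refine le_trans ?_ (log_diff_lower h1δ' ht)
      have : t / (1 - δ) ≤ δ + t := by
        rw [div_le_iff₀ h1δ']; nlinarith
      linarith
    -- step B : log (1-δ) ≤ -δ - δ²/4
    have hB : Real.log (1 - δ) ≤ -δ - δ ^ 2 / 4 := by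
      have h1 := log_diff_lower h1δ2 h1δ'
      have h2 : Real.log (1 - δ / 2) ≤ -(δ / 2) := by
        have := Real.log_le_sub_one_of_pos h1δ2; linarith
      have h3 : δ / 2 + δ ^ 2 / 4 ≤ 1 - (1 - δ) / (1 - δ / 2) := by
        have : (1 - δ) / (1 - δ / 2) ≤ 1 - δ / 2 - δ ^ 2 / 4 := by
          rw [div_le_iff₀ h1δ2]; nlinarith
        linarith
      linarith
    -- step C : δ - log (1+δ) ≤ δ²
    have hC : δ - Real.log (1 + δ) ≤ δ ^ 2 := by
      have h1 := log_diff_lower h1δ one_pos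
      rw [Real.log_one] at h1
      have h2 : δ - δ ^ 2 ≤ 1 - 1 / (1 + δ) := by
        have : 1 / (1 + δ) ≤ 1 - δ + δ ^ 2 := by
          rw [div_le_iff₀ h1δ]; nlinarith
        linarith
      linarith
    linarith

set_option maxHeartbeats 1000000 in
/-- exponential tail bound for the generalized Post-Widder kernel
away from `t = 1`. -/
theorem stmt_12 (x : ℝ) (hx : 0 < x) (c : ℝ → ℝ)
    (hc : Filter.IsBoundedUnder (· ≤ ·) Filter.atTop (fun y => c y ^ 2 / y))
    (K : ℕ → ℝ → ℂ)
    (hK : ∀ (N : ℕ) (t : ℝ), K N t =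
      (((N : ℂ) + Complex.I * x * c (N / x)) ^ (N + 1) / (Nat.factorial N : ℂ)) *
        (t : ℂ) ^ N * Complex.exp (-((N : ℂ) + Complex.I * x * c (N / x)) * t))
    (δ : ℝ) (hδ0 : 0 < δ) (hδ1 : δ < 1) :
    ∃ (N₀ : ℕ) (C : ℝ), 0 < C ∧ ∀ N > N₀, ∀ r ∈ ({0, 1, 2} : Set ℕ),
      (∫ t in {t : ℝ | 0 ≤ t ∧ δ ≤ |t - 1|}, t ^ r * ‖K N t‖) ≤
        C * Real.exp (N * (Real.log (1 + δ) - δ) / 8) := by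
  classical
  -- bound on c
  obtain ⟨B₀, hB₀⟩ := hc
  rw [Filter.eventually_map] at hB₀
  obtain ⟨y₀, hy₀⟩ := Filter.eventually_atTop.mp hB₀
  set B : ℝ := max B₀ 0 with hBdef
  have hB : 0 ≤ B := le_max_right _ _
  -- the decay rate
  set η : ℝ := (δ - Real.log (1 + δ)) / 8 with hηdef
  have hη : 0 < η := by
    have := Real.log_lt_sub_one_of_pos (show (0:ℝ) < 1 + δ by linarith)
      (show (1:ℝ) + δ ≠ 1 by intro h; linarith)
    have : Real.log (1 + δ) < δ := by linarith
    simp only [hηdef]; linarith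
  -- reference integral
  set I₀ : ℝ := ∫ t in Set.Ici (0:ℝ), Real.exp (-6 * t) with hI₀def
  have hI₀ : 0 ≤ I₀ := integral_nonneg fun t => (Real.exp_pos _).le
  have hIexp : IntegrableOn (fun t => Real.exp (-6 * t)) (Set.Ici (0:ℝ)) := by
    rw [integrableOn_Ici_iff_integrableOn_Ioi]
    exact exp_neg_integrableOn_Ioi 0 (by norm_num)
  refine ⟨max 8 ⌈x * max y₀ 1⌉₊,
    362880 * Real.exp (B * x) * Real.exp (7 + 14 * η) / η * (I₀ + 1), by positivity,
    fun N hN r hr => ?_⟩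
  have hN8 : 8 < N := lt_of_le_of_lt (le_max_left _ _) hN
  have hNpos : (0:ℝ) < N := by positivity
  have hN7 : (7:ℝ) ≤ (N:ℝ) := by exact_mod_cast le_trans (by norm_num) hN8.le
  -- c (N/x) bound
  have hNx : max y₀ 1 ≤ N / x := by
    rw [le_div_iff₀ hx]
    calc max y₀ 1 * x = x * max y₀ 1 := by ring
    _ ≤ ⌈x * max y₀ 1⌉₊ := Nat.le_ceil _
    _ ≤ (N:ℝ) := by
        exact_mod_cast (le_trans (le_max_right 8 _) hN.le)
  have hcb : c (N / x) ^ 2 / (N / x) ≤ B :=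
    le_trans (hy₀ _ (le_trans (le_max_left _ _) hNx)) (le_max_left _ _)
  have hNxpos : 0 < N / x := div_pos hNpos hx
  have ha2 : (x * c (N / x)) ^ 2 ≤ B * x * N := by
    have h1 : c (N / x) ^ 2 ≤ B * (N / x) := by
      rw [div_le_iff₀ hNxpos] at hcb; linarith
    have h2 : (x * c (N / x)) ^ 2 = x ^ 2 * c (N / x) ^ 2 := by ring
    have h3 : x ^ 2 * (B * (N / x)) = B * x * N := by field_simp
    nlinarith [sq_nonneg x]
  -- the complex coefficient
  set z : ℂ := (N : ℂ) + Complex.I * x * c (N / x) with hzdef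
  have hzre : z.re = N := by simp [hzdef]
  have hzim : z.im = x * c (N / x) := by simp [hzdef]
  have habs2 : ‖z‖ ^ 2 = (N:ℝ) ^ 2 + (x * c (N / x)) ^ 2 := by
    rw [Complex.sq_norm, Complex.normSq_apply, hzre, hzim]; ring
  have habs : ‖z‖ ≤ N * Real.exp (B * x / (2 * N)) := by
    have h0 : 0 ≤ ‖z‖ := norm_nonneg z
    have hrhs : 0 ≤ (N:ℝ) * Real.exp (B * x / (2 * N)) := by positivity
    have hsq : ‖z‖ ^ 2 ≤ ((N:ℝ) * Real.exp (B * x / (2 * N))) ^ 2 := by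
      have he : ((N:ℝ) * Real.exp (B * x / (2 * N))) ^ 2 = (N:ℝ) ^ 2 * Real.exp (B * x / N) := by
        rw [mul_pow, sq (Real.exp _), ← Real.exp_add]
        congr 1
        field_simp
        ring
      rw [habs2, he]
      have h1 : 1 + B * x / N ≤ Real.exp (B * x / N) := by
        have := Real.add_one_le_exp (B * x / N); linarith
      have h2 : (N:ℝ) ^ 2 * (1 + B * x / N) = (N:ℝ) ^ 2 + B * x * N := by
        field_simp
      nlinarith [sq_nonneg (N:ℝ)]
    nlinarith
  -- bound on the constant M
  have hfacpos : (0:ℝ) < (Nat.factorial N : ℝ) := by positivity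
  have hM : ‖z‖ ^ (N + 1) / (Nat.factorial N : ℝ) ≤ N * Real.exp (N + B * x) := by
    have h2 : ((N:ℝ) * Real.exp (B * x / (2 * N))) ^ (N + 1)
        = (N:ℝ) ^ (N + 1) * Real.exp (((N:ℝ) + 1) * (B * x / (2 * N))) := by
      rw [mul_pow, ← Real.exp_nat_mul]
      push_cast
      ring_nf
    have h3 : ((N:ℝ) + 1) * (B * x / (2 * N)) ≤ B * x := by
      have hle : ((N:ℝ) + 1) / (2 * N) ≤ 1 := by
        rw [div_le_one (by positivity)]; linarith
      have heq : ((N:ℝ) + 1) * (B * x / (2 * N)) = B * x * (((N:ℝ) + 1) / (2 * N)) := by ring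
      rw [heq]
      nlinarith [mul_nonneg hB hx.le]
    have h5 : (N:ℝ) ^ N / (Nat.factorial N : ℝ) ≤ Real.exp N :=
      Real.pow_div_factorial_le_exp (N:ℝ) hNpos.le N
    calc ‖z‖ ^ (N + 1) / (Nat.factorial N : ℝ)
        ≤ ((N:ℝ) * Real.exp (B * x / (2 * N))) ^ (N + 1) / (Nat.factorial N : ℝ) := by
          gcongr
      _ = (N:ℝ) ^ (N + 1) / (Nat.factorial N : ℝ) * Real.exp (((N:ℝ) + 1) * (B * x / (2 * N))) := by
          rw [h2]; ring
      _ ≤ (N:ℝ) ^ (N + 1) / (Nat.factorial N : ℝ) * Real.exp (B * x) := by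
          gcongr
      _ = (N:ℝ) * ((N:ℝ) ^ N / (Nat.factorial N : ℝ)) * Real.exp (B * x) := by
          rw [pow_succ]; ring
      _ ≤ (N:ℝ) * Real.exp N * Real.exp (B * x) := by gcongr
      _ = N * Real.exp (N + B * x) := by rw [Real.exp_add]; ring
  -- the pointwise bound constant
  set A : ℝ := N * Real.exp (N + B * x) * 362880 * Real.exp (-((N:ℝ) - 7) * (1 + 2 * η))
    with hAdef
  have hA0 : 0 ≤ A := by positivity
  -- r is at most 2
  have hrle : r + 7 ≤ 9 := by
    simp only [Set.mem_insert_iff, Set.mem_singleton_iff] at hr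
    rcases hr with rfl | rfl | rfl <;> norm_num
  have hfac9 : (Nat.factorial (r + 7) : ℝ) ≤ 362880 := by
    have := Nat.factorial_le hrle
    have h9 : Nat.factorial 9 = 362880 := by decide
    exact_mod_cast h9 ▸ this
  -- abs of kernel
  have hKabs : ∀ t : ℝ, 0 ≤ t → ‖K N t‖
      = ‖z‖ ^ (N + 1) / (Nat.factorial N : ℝ) * (t ^ N * Real.exp (-(N * t))) := by
    intro t ht
    rw [hK, ← hzdef]
    rw [norm_mul, norm_mul, norm_div, norm_pow, norm_pow]
    have h1 : ‖((Nat.factorial N : ℂ))‖ = (Nat.factorial N : ℝ) := by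
      rw [Complex.norm_natCast]
    have h2 : ‖((t : ℂ))‖ = t := by
      rw [Complex.norm_of_nonneg ht]
    have h3 : ‖Complex.exp (-z * t)‖ = Real.exp (-(N * t)) := by
      rw [Complex.norm_exp]
      congr 1
      simp only [Complex.mul_re, Complex.neg_re, Complex.neg_im, Complex.ofReal_re,
        Complex.ofReal_im, hzre, hzim]
      ring
    rw [h1, h2, h3]
    ring
  -- pointwise bound on the region
  set S : Set ℝ := {t : ℝ | 0 ≤ t ∧ δ ≤ |t - 1|} with hSdef
  have hpt : ∀ t ∈ S, t ^ r * ‖K N t‖ ≤ A * Real.exp (-6 * t) := by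
    rintro t ⟨ht0, htsep⟩
    rw [hKabs t ht0]
    rcases eq_or_lt_of_le ht0 with h | htpos
    · -- t = 0
      rw [← h]
      have hNne : N ≠ 0 := by omega
      rw [zero_pow hNne]
      simp
      positivity
    · -- t > 0
      have hG : Real.log t - t ≤ -(1 + 2 * η) := by
        have := kernel_exponent_bound hδ0 hδ1 htpos htsep
        simp only [hηdef] at *
        linarith
      have hexp : t ^ N * Real.exp (-(N * t)) = Real.exp ((N:ℝ) * (Real.log t - t)) := by
        have heq : (N:ℝ) * (Real.log t - t) = (N:ℝ) * Real.log t + -((N:ℝ) * t) := by ring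
        rw [heq, Real.exp_add, Real.exp_nat_mul, Real.exp_log htpos]
      have hsplit : Real.exp ((N:ℝ) * (Real.log t - t))
          = Real.exp (((N:ℝ) - 7) * (Real.log t - t)) * Real.exp (7 * (Real.log t - t)) := by
        rw [← Real.exp_add]; ring_nf
      have h1 : Real.exp (((N:ℝ) - 7) * (Real.log t - t))
          ≤ Real.exp (-((N:ℝ) - 7) * (1 + 2 * η)) := by
        apply Real.exp_le_exp.mpr
        have hN7' : 0 ≤ (N:ℝ) - 7 := by linarith
        nlinarith
      have h2 : Real.exp (7 * (Real.log t - t)) = t ^ 7 * Real.exp (-(7 * t)) := by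
        have heq : (7:ℝ) * (Real.log t - t) = ((7:ℕ):ℝ) * Real.log t + -((7:ℝ) * t) := by
          push_cast; ring
        rw [heq, Real.exp_add, Real.exp_nat_mul, Real.exp_log htpos]
      have h3 : t ^ r * t ^ 7 * Real.exp (-(7 * t)) ≤ 362880 * Real.exp (-6 * t) := by
        have hp : t ^ (r + 7) ≤ 362880 * Real.exp t := by
          have := Real.pow_div_factorial_le_exp t ht0 (r + 7)
          rw [div_le_iff₀ (by positivity : (0:ℝ) < (Nat.factorial (r + 7) : ℝ))] at this
          calc t ^ (r + 7) ≤ Real.exp t * (Nat.factorial (r + 7) : ℝ) := this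
            _ ≤ Real.exp t * 362880 := by
                exact mul_le_mul_of_nonneg_left hfac9 (Real.exp_pos _).le
            _ = 362880 * Real.exp t := by ring
        calc t ^ r * t ^ 7 * Real.exp (-(7 * t)) = t ^ (r + 7) * Real.exp (-(7 * t)) := by
              rw [pow_add]
          _ ≤ 362880 * Real.exp t * Real.exp (-(7 * t)) := by
              exact mul_le_mul_of_nonneg_right hp (Real.exp_pos _).le
          _ = 362880 * Real.exp (-6 * t) := by
              rw [mul_assoc, ← Real.exp_add]; ring_nf
      -- combine
      set M : ℝ := ‖z‖ ^ (N + 1) / (Nat.factorial N : ℝ) with hMdef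
      have hM0 : 0 ≤ M := by positivity
      calc t ^ r * (M * (t ^ N * Real.exp (-(N * t))))
          = M * (t ^ r * Real.exp ((N:ℝ) * (Real.log t - t))) := by rw [hexp]; ring
        _ ≤ M * (Real.exp (-((N:ℝ) - 7) * (1 + 2 * η)) * (t ^ r * t ^ 7 * Real.exp (-(7 * t)))) := by
            apply mul_le_mul_of_nonneg_left ?_ hM0
            rw [hsplit, h2]
            have ht7 : 0 ≤ t ^ r * (t ^ 7 * Real.exp (-(7*t))) := by positivity
            calc t ^ r * (Real.exp (((N:ℝ) - 7) * (Real.log t - t)) * (t ^ 7 * Real.exp (-(7 * t))))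
                = Real.exp (((N:ℝ) - 7) * (Real.log t - t)) * (t ^ r * (t ^ 7 * Real.exp (-(7 * t)))) := by ring
              _ ≤ Real.exp (-((N:ℝ) - 7) * (1 + 2 * η)) * (t ^ r * (t ^ 7 * Real.exp (-(7 * t)))) :=
                  mul_le_mul_of_nonneg_right h1 ht7
              _ = Real.exp (-((N:ℝ) - 7) * (1 + 2 * η)) * (t ^ r * t ^ 7 * Real.exp (-(7 * t))) := by ring
        _ ≤ M * (Real.exp (-((N:ℝ) - 7) * (1 + 2 * η)) * (362880 * Real.exp (-6 * t))) := by
            apply mul_le_mul_of_nonneg_left ?_ hM0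
            exact mul_le_mul_of_nonneg_left h3 (Real.exp_pos _).le
        _ ≤ N * Real.exp (N + B * x) * (Real.exp (-((N:ℝ) - 7) * (1 + 2 * η)) * (362880 * Real.exp (-6 * t))) := by
            apply mul_le_mul_of_nonneg_right hM ?_
            positivity
        _ = A * Real.exp (-6 * t) := by rw [hAdef]; ring
  -- measurability & integrability
  have hS : MeasurableSet S := by
    have : S = Set.Ici (0:ℝ) ∩ {t : ℝ | δ ≤ |t - 1|} := rfl
    rw [this]
    exact measurableSet_Ici.inter
      (measurableSet_le measurable_const ((measurable_id.sub measurable_const).abs))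
  have hsub : S ⊆ Set.Ici (0:ℝ) := fun t ht => ht.1
  have hgint : IntegrableOn (fun t => A * Real.exp (-6 * t)) (Set.Ici (0:ℝ)) :=
    hIexp.const_mul A
  have hgintS : IntegrableOn (fun t => A * Real.exp (-6 * t)) S := hgint.mono_set hsub
  have hKcont : Continuous fun t : ℝ => t ^ r * ‖K N t‖ := by
    have hfun : K N = fun t : ℝ =>
        (z ^ (N + 1) / (Nat.factorial N : ℂ)) * (t : ℂ) ^ N * Complex.exp (-z * t) := by
      funext t; rw [hK, hzdef]
    apply Continuous.mul (continuous_pow r)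
    apply continuous_norm.comp
    rw [hfun]
    fun_prop
  have hfint : IntegrableOn (fun t => t ^ r * ‖K N t‖) S := by
    apply Integrable.mono' hgintS (hKcont.aestronglyMeasurable.restrict)
    refine (ae_restrict_iff' hS).mpr (ae_of_all _ fun t ht => ?_)
    rw [Real.norm_eq_abs,
      abs_of_nonneg (mul_nonneg (pow_nonneg ht.1 r) (norm_nonneg _))]
    exact hpt t ht
  -- chain of bounds
  have hstep1 : (∫ t in S, t ^ r * ‖K N t‖) ≤ ∫ t in S, A * Real.exp (-6 * t) :=
    setIntegral_mono_on hfint hgintS hS hpt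
  have hstep2 : (∫ t in S, A * Real.exp (-6 * t)) ≤ ∫ t in Set.Ici (0:ℝ), A * Real.exp (-6 * t) :=
    setIntegral_mono_set hgint (ae_of_all _ fun t => by positivity) hsub.eventuallyLE
  have hstep3 : (∫ t in Set.Ici (0:ℝ), A * Real.exp (-6 * t)) = A * I₀ := by
    rw [hI₀def, ← integral_const_mul]
  -- final algebra
  have hfinal : A * I₀ ≤ 362880 * Real.exp (B * x) * Real.exp (7 + 14 * η) / η * (I₀ + 1) *
      Real.exp (N * (Real.log (1 + δ) - δ) / 8) := by
    have hexpe : (N:ℝ) * (Real.log (1 + δ) - δ) / 8 = -(η * N) := by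
      rw [hηdef]; ring
    rw [hexpe]
    have h1 : Real.exp ((N:ℝ) + B * x) * Real.exp (-((N:ℝ) - 7) * (1 + 2 * η))
        = Real.exp (B * x) * Real.exp (7 + 14 * η) * Real.exp (-(2 * η * N)) := by
      rw [← Real.exp_add, ← Real.exp_add, ← Real.exp_add]
      ring_nf
    have h2 : (N:ℝ) * Real.exp (-(2 * η * N)) ≤ (1 / η) * Real.exp (-(η * N)) := by
      have h3 : η * N ≤ Real.exp (η * N) := by
        have := Real.add_one_le_exp (η * (N:ℝ)); linarith
      have h4 : Real.exp (-(2 * η * N)) = Real.exp (-(η * N)) * Real.exp (-(η * N)) := by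
        rw [← Real.exp_add]; ring_nf
      rw [h4]
      have h5 : (N:ℝ) ≤ (1 / η) * Real.exp (η * N) := by
        rw [div_mul_eq_mul_div, le_div_iff₀ hη]
        nlinarith
      calc (N:ℝ) * (Real.exp (-(η * N)) * Real.exp (-(η * N)))
          ≤ (1 / η) * Real.exp (η * N) * (Real.exp (-(η * N)) * Real.exp (-(η * N))) := by
            apply mul_le_mul_of_nonneg_right h5 (by positivity)
        _ = (1 / η) * (Real.exp (η * N) * Real.exp (-(η * N))) * Real.exp (-(η * N)) := by ring
        _ = (1 / η) * Real.exp (-(η * N)) := by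
            rw [← Real.exp_add]; simp
    calc A * I₀ = (N:ℝ) * Real.exp (-(2 * η * N))
          * (362880 * (Real.exp (B * x) * Real.exp (7 + 14 * η))) * I₀ := by
          rw [hAdef]
          have : (N:ℝ) * Real.exp (↑N + B * x) * 362880 * Real.exp (-((N:ℝ) - 7) * (1 + 2 * η))
              = (N:ℝ) * (Real.exp (↑N + B * x) * Real.exp (-((N:ℝ) - 7) * (1 + 2 * η))) * 362880 := by
            ring
          rw [this, h1]; ring
      _ ≤ (1 / η) * Real.exp (-(η * N))
          * (362880 * (Real.exp (B * x) * Real.exp (7 + 14 * η))) * I₀ := by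
          apply mul_le_mul_of_nonneg_right ?_ hI₀
          exact mul_le_mul_of_nonneg_right h2 (by positivity)
      _ ≤ (1 / η) * Real.exp (-(η * N))
          * (362880 * (Real.exp (B * x) * Real.exp (7 + 14 * η))) * (I₀ + 1) := by
          apply mul_le_mul_of_nonneg_left (by linarith) (by positivity)
      _ = 362880 * Real.exp (B * x) * Real.exp (7 + 14 * η) / η * (I₀ + 1)
          * Real.exp (-(η * N)) := by ring
  calc (∫ t in S, t ^ r * ‖K N t‖) ≤ A * I₀ := by
        rw [← hstep3]; exact le_trans hstep1 hstep2
    _ ≤ _ := hfinal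
end

section
/- Let x > 0, let c : ℝ₊ → ℝ satisfy limsup_{y→∞} c(y)²/y < ∞, and let K_N be the generalized Post-Widder kernel. Then for each r ∈ {1,2} there is a constant C_{r,x} such that for all N ≥ 1: ∫₀^∞ |t−1|^r · |K_N(t,x)| dt ≤ C_{r,x} · N^{−r/2}. -/
open MeasureTheory

open Real Set Filter

lemma pw_integrable (n : ℕ) {b : ℝ} (hb : 0 < b) :
    IntegrableOn (fun t : ℝ => t ^ n * Real.exp (-(b * t))) (Set.Ioi 0) := by
  apply integrable_of_isBigO_exp_neg (half_pos hb) (by fun_prop) (a := 0)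
  have hlim : Tendsto (fun t : ℝ => (2 / b) ^ n * (((b / 2) * t) ^ n *
      Real.exp (-((b / 2) * t)))) atTop (nhds ((2 / b) ^ n * 0)) := by
    exact (tendsto_const_nhds.mul ((tendsto_pow_mul_exp_neg_atTop_nhds_zero n).comp
      (tendsto_id.const_mul_atTop (half_pos hb))))
  rw [mul_zero] at hlim
  have heq : ∀ᶠ t : ℝ in atTop, t ^ n * Real.exp (-(b * t)) / Real.exp (-(b / 2) * t)
      = (2 / b) ^ n * (((b / 2) * t) ^ n * Real.exp (-((b / 2) * t))) := by
    filter_upwards with t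
    rw [← mul_assoc, ← mul_pow]
    have h1 : 2 / b * (b / 2 * t) = t := by field_simp
    rw [h1, div_eq_iff (Real.exp_ne_zero _), mul_assoc, ← Real.exp_add]
    congr 2
    ring
  refine (Asymptotics.isLittleO_iff_tendsto (fun t h => absurd h (Real.exp_ne_zero _).elim)
    |>.2 ?_).isBigO
  exact Tendsto.congr' (EventuallyEq.symm heq) hlim

lemma pw_moment (n : ℕ) {b : ℝ} (hb : 0 < b) :
    ∫ t in Set.Ioi (0:ℝ), t ^ n * Real.exp (-(b * t)) = n.factorial / b ^ (n + 1) := by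
  have h := Real.integral_rpow_mul_exp_neg_mul_Ioi (a := (n + 1 : ℝ)) (by positivity) hb
  rw [Real.Gamma_nat_eq_factorial] at h
  calc ∫ t in Set.Ioi (0:ℝ), t ^ n * Real.exp (-(b * t))
      = ∫ t in Set.Ioi (0:ℝ), t ^ ((n + 1 : ℝ) - 1) * Real.exp (-(b * t)) := by
        refine setIntegral_congr_fun measurableSet_Ioi (fun t ht => ?_)
        rw [show (n + 1 : ℝ) - 1 = (n : ℝ) by ring, Real.rpow_natCast]
    _ = (1 / b) ^ ((n : ℝ) + 1) * ((n : ℕ).factorial : ℝ) := h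
    _ = n.factorial / b ^ (n + 1) := by
        rw [show ((n : ℝ) + 1) = ((n + 1 : ℕ) : ℝ) by push_cast; ring, Real.rpow_natCast,
          one_div, inv_pow, inv_mul_eq_div]

lemma pw_moment2 (N : ℕ) (hN : 1 ≤ N) :
    ∫ t in Set.Ioi (0:ℝ), (t - 1) ^ 2 * (t ^ N * Real.exp (-(N * t))) =
      ((N.factorial : ℝ) / (N : ℝ) ^ (N + 1)) * (((N : ℝ) + 2) / (N : ℝ) ^ 2) := by
  have hb : (0:ℝ) < N := by exact_mod_cast hN
  have i0 := pw_integrable N hb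
  have i1 := pw_integrable (N + 1) hb
  have i2 := pw_integrable (N + 2) hb
  have hN0 : (N : ℝ) ≠ 0 := hb.ne'
  calc ∫ t in Set.Ioi (0:ℝ), (t - 1) ^ 2 * (t ^ N * Real.exp (-(N * t)))
      = ∫ t in Set.Ioi (0:ℝ), (t ^ (N + 2) * Real.exp (-(N * t))
          - 2 * (t ^ (N + 1) * Real.exp (-(N * t))) + t ^ N * Real.exp (-(N * t))) := by
        refine setIntegral_congr_fun measurableSet_Ioi (fun t _ => ?_)
        ring
    _ = (∫ t in Set.Ioi (0:ℝ), t ^ (N + 2) * Real.exp (-(N * t)))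
          - 2 * (∫ t in Set.Ioi (0:ℝ), t ^ (N + 1) * Real.exp (-(N * t)))
          + ∫ t in Set.Ioi (0:ℝ), t ^ N * Real.exp (-(N * t)) := by
        have im : IntegrableOn (fun t : ℝ => 2 * (t ^ (N + 1) * Real.exp (-(N * t))))
            (Set.Ioi 0) := i1.const_mul 2
        have isub : IntegrableOn (fun t : ℝ => t ^ (N + 2) * Real.exp (-(N * t))
            - 2 * (t ^ (N + 1) * Real.exp (-(N * t)))) (Set.Ioi 0) := i2.sub im
        rw [integral_add isub i0, integral_sub i2 im, MeasureTheory.integral_const_mul]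
    _ = ((N + 2).factorial : ℝ) / (N : ℝ) ^ (N + 3)
          - 2 * (((N + 1).factorial : ℝ) / (N : ℝ) ^ (N + 2))
          + (N.factorial : ℝ) / (N : ℝ) ^ (N + 1) := by
        rw [pw_moment N hb, pw_moment (N + 1) hb, pw_moment (N + 2) hb]
    _ = ((N.factorial : ℝ) / (N : ℝ) ^ (N + 1)) * (((N : ℝ) + 2) / (N : ℝ) ^ 2) := by
        have h2 : ((N + 2).factorial : ℝ) = ((N : ℝ) + 2) * ((N : ℝ) + 1) * N.factorial := by
          rw [Nat.factorial_succ, Nat.factorial_succ]; push_cast; ring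
        have h1 : ((N + 1).factorial : ℝ) = ((N : ℝ) + 1) * N.factorial := by
          rw [Nat.factorial_succ]; push_cast; ring
        rw [h2, h1, pow_add, pow_add, pow_add]
        field_simp
        ring

lemma pw_wrap {f h : ℕ → ℝ} (hh : ∀ N, 1 ≤ N → 0 < h N)
    (H : ∃ C₀ : ℝ, ∀ᶠ N in atTop, f N ≤ C₀ * h N) :
    ∃ C : ℝ, ∀ N, 1 ≤ N → f N ≤ C * h N := by
  obtain ⟨C₀, H⟩ := H
  obtain ⟨N₀, hN₀⟩ := eventually_atTop.1 H
  set C₁ : ℝ := (Finset.range (N₀ + 1)).sup' ⟨0, by simp⟩ (fun N => f N / h N) with hC₁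
  refine ⟨max C₀ C₁, fun N hN => ?_⟩
  rcases le_or_gt N₀ N with h1 | h1
  · exact (hN₀ N h1).trans (mul_le_mul_of_nonneg_right (le_max_left _ _) (hh N hN).le)
  · have hmem : N ∈ Finset.range (N₀ + 1) := Finset.mem_range.2 (by omega)
    have h2 : f N / h N ≤ C₁ := Finset.le_sup' (fun N => f N / h N) hmem
    have h3 := (div_le_iff₀ (hh N hN)).1 (h2.trans (le_max_right C₀ C₁))
    linarith [h3]

lemma pw_abs (x cx t : ℝ) (N : ℕ) (ht : 0 < t) :
    ‖(((N : ℂ) + Complex.I * x * cx) ^ (N + 1) / (N.factorial : ℂ)) *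
      (t : ℂ) ^ N * Complex.exp (-((N : ℂ) + Complex.I * x * cx) * t)‖ =
    ‖(N : ℂ) + Complex.I * x * cx‖ ^ (N + 1) / N.factorial *
      (t ^ N * Real.exp (-(N * t))) := by
  rw [norm_mul, norm_mul, norm_div, norm_pow, norm_pow, Complex.norm_natCast, Complex.norm_real,
    Real.norm_eq_abs, Complex.norm_exp, abs_of_pos ht, mul_assoc]
  congr 2
  simp [Complex.mul_re, Complex.add_re, Complex.neg_re, Complex.add_im, Complex.neg_im,
    Complex.mul_im]

lemma pw_sq (x cx : ℝ) (N : ℕ) :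
    ‖(N : ℂ) + Complex.I * x * cx‖ ^ 2 = (N : ℝ) ^ 2 + (x * cx) ^ 2 := by
  rw [Complex.sq_norm, Complex.normSq_apply]
  simp [Complex.add_re, Complex.add_im, Complex.mul_re, Complex.mul_im]
  ring

lemma pw_factor {S : ℝ} {N : ℕ} (hN : 1 ≤ N) {D : ℝ} (hD : 0 ≤ D) (hS0 : 0 ≤ S)
    (hS2 : S ^ 2 ≤ (N : ℝ) ^ 2 + D * N) (hSge : (N : ℝ) ^ 2 ≤ S ^ 2) :
    (S / N) ^ (N + 1) ≤ Real.exp (2 * D) := by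
  have hn : (0:ℝ) < N := by exact_mod_cast hN
  have h1 : 1 ≤ S / N := by
    rw [le_div_iff₀ hn, one_mul]
    nlinarith
  have h2 : (S / N) ^ 2 ≤ Real.exp (D / N) := by
    have ha : (S / N) ^ 2 ≤ 1 + D / N := by
      rw [div_pow, div_le_iff₀ (by positivity)]
      have : (1 + D / N) * (N:ℝ) ^ 2 = (N:ℝ)^2 + D * N * (N / N) := by ring
      rw [this, div_self hn.ne', mul_one]
      exact hS2
    have hb := Real.add_one_le_exp (D / N)
    linarith
  calc (S / N) ^ (N + 1) ≤ (S / N) ^ (2 * (N + 1)) := pow_le_pow_right₀ h1 (by omega)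
    _ = ((S / N) ^ 2) ^ (N + 1) := by rw [pow_mul]
    _ ≤ (Real.exp (D / N)) ^ (N + 1) := pow_le_pow_left₀ (sq_nonneg _) h2 _
    _ = Real.exp ((N + 1 : ℕ) * (D / N)) := by rw [Real.exp_nat_mul]
    _ ≤ Real.exp (2 * D) := by
        rw [Real.exp_le_exp, Nat.cast_add, Nat.cast_one]
        have h4 : D / (N:ℝ) * (N:ℝ) = D := div_mul_cancel₀ D hn.ne'
        have hn1 : (1:ℝ) ≤ N := by exact_mod_cast hN
        have h5 : ((N:ℝ) + 1) * (D / N) ≤ (2 * (N:ℝ)) * (D / N) := by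
          apply mul_le_mul_of_nonneg_right (by linarith) (by positivity)
        calc ((N:ℝ) + 1) * (D / N) ≤ (2 * (N:ℝ)) * (D / N) := h5
          _ = 2 * (D / N * N) := by ring
          _ = 2 * D := by rw [h4]

lemma pw_amgm (u s : ℝ) (hs : 0 < s) : |u| ≤ 1 / (2 * s) + s / 2 * u ^ 2 := by
  have key : 2 * s * |u| ≤ 1 + s ^ 2 * u ^ 2 := by
    nlinarith [sq_nonneg (s * |u| - 1), sq_abs u]
  have h2 : |u| = 2 * s * |u| / (2 * s) := by field_simp
  rw [h2, div_le_iff₀ (by positivity)]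
  calc 2 * s * |u| ≤ 1 + s ^ 2 * u ^ 2 := key
    _ = (1 / (2 * s) + s / 2 * u ^ 2) * (2 * s) := by field_simp

lemma pw_int2 (N : ℕ) (hb : 0 < (N:ℝ)) :
    IntegrableOn (fun t : ℝ => (t - 1) ^ 2 * (t ^ N * Real.exp (-(N * t)))) (Set.Ioi 0) := by
  have he : (fun t : ℝ => (t - 1) ^ 2 * (t ^ N * Real.exp (-(N * t))))
      = fun t : ℝ => (t ^ (N + 2) * Real.exp (-(N * t))
        - 2 * (t ^ (N + 1) * Real.exp (-(N * t)))) + t ^ N * Real.exp (-(N * t)) :=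
    funext fun t => by ring
  rw [he]
  exact ((pw_integrable _ hb).sub ((pw_integrable _ hb).const_mul 2)).add (pw_integrable _ hb)

lemma pw_moment1 (N : ℕ) (hN : 1 ≤ N) :
    ∫ t in Set.Ioi (0:ℝ), |t - 1| * (t ^ N * Real.exp (-(N * t))) ≤
      ((N.factorial : ℝ) / (N : ℝ) ^ (N + 1)) * (2 / Real.sqrt N) := by
  have hb : (0:ℝ) < N := by exact_mod_cast hN
  have hn1 : (1:ℝ) ≤ N := by exact_mod_cast hN
  set s := Real.sqrt N with hsdef
  have hs : 0 < s := Real.sqrt_pos.2 hb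
  have hss : s ^ 2 = (N : ℝ) := Real.sq_sqrt hb.le
  set g : ℝ → ℝ := fun t => 1 / (2 * s) * (t ^ N * Real.exp (-(N * t)))
    + s / 2 * ((t - 1) ^ 2 * (t ^ N * Real.exp (-(N * t)))) with hgdef
  have hg1 : IntegrableOn (fun t : ℝ => 1 / (2 * s) * (t ^ N * Real.exp (-(N * t))))
      (Set.Ioi 0) := (pw_integrable N hb).const_mul _
  have hg2 : IntegrableOn (fun t : ℝ =>
      s / 2 * ((t - 1) ^ 2 * (t ^ N * Real.exp (-(N * t))))) (Set.Ioi 0) :=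
    (pw_int2 N hb).const_mul _
  have hg : IntegrableOn g (Set.Ioi 0) := hg1.add hg2
  have step1 : ∫ t in Set.Ioi (0:ℝ), |t - 1| * (t ^ N * Real.exp (-(N * t)))
      ≤ ∫ t in Set.Ioi (0:ℝ), g t := by
    refine integral_mono_of_nonneg ?_ hg ?_
    · filter_upwards [ae_restrict_mem measurableSet_Ioi] with t ht
      exact mul_nonneg (abs_nonneg _)
        (mul_nonneg (pow_nonneg (le_of_lt ht) _) (Real.exp_pos _).le)
    · filter_upwards [ae_restrict_mem measurableSet_Ioi] with t ht
      have hw : 0 ≤ t ^ N * Real.exp (-(N * t)) :=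
        mul_nonneg (pow_nonneg (le_of_lt ht) _) (Real.exp_pos _).le
      calc |t - 1| * (t ^ N * Real.exp (-(N * t)))
          ≤ (1 / (2 * s) + s / 2 * (t - 1) ^ 2) * (t ^ N * Real.exp (-(N * t))) :=
            mul_le_mul_of_nonneg_right (pw_amgm (t - 1) s hs) hw
        _ = g t := by rw [hgdef]; ring
  have step2 : ∫ t in Set.Ioi (0:ℝ), g t
      = 1 / (2 * s) * ((N.factorial : ℝ) / (N : ℝ) ^ (N + 1))
        + s / 2 * (((N.factorial : ℝ) / (N : ℝ) ^ (N + 1)) * (((N : ℝ) + 2) / (N : ℝ) ^ 2)) := by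
    rw [hgdef, integral_add hg1 hg2, MeasureTheory.integral_const_mul,
      MeasureTheory.integral_const_mul, pw_moment N hb, pw_moment2 N hN]
  have hM0 : 0 ≤ (N.factorial : ℝ) / (N : ℝ) ^ (N + 1) := by positivity
  have step3 : 1 / (2 * s) + s / 2 * (((N : ℝ) + 2) / (N : ℝ) ^ 2) ≤ 2 / s := by
    have hform : s / 2 * (((N:ℝ) + 2) / (N:ℝ) ^ 2)
        = s * ((N:ℝ) + 2) / (2 * (N:ℝ) ^ 2) := by ring
    rw [hform, div_add_div _ _ (by positivity) (by positivity : (2:ℝ) * (N:ℝ)^2 ≠ 0),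
      div_le_div_iff₀ (by positivity) hs]
    have hsss : s ^ 2 * s = (N : ℝ) * s := by rw [hss]
    nlinarith [hss, hsss, hs, hn1, mul_nonneg (mul_nonneg hs.le hb.le)
      (by linarith : (0:ℝ) ≤ (N:ℝ) - 1)]
  calc ∫ t in Set.Ioi (0:ℝ), |t - 1| * (t ^ N * Real.exp (-(N * t)))
      ≤ 1 / (2 * s) * ((N.factorial : ℝ) / (N : ℝ) ^ (N + 1))
        + s / 2 * (((N.factorial : ℝ) / (N : ℝ) ^ (N + 1)) * (((N : ℝ) + 2) / (N : ℝ) ^ 2)) := by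
        rw [← step2]; exact step1
    _ = ((N.factorial : ℝ) / (N : ℝ) ^ (N + 1))
        * (1 / (2 * s) + s / 2 * (((N : ℝ) + 2) / (N : ℝ) ^ 2)) := by ring
    _ ≤ ((N.factorial : ℝ) / (N : ℝ) ^ (N + 1)) * (2 / s) :=
        mul_le_mul_of_nonneg_left step3 hM0

lemma pw_main (x cx : ℝ) (N : ℕ) (hN : 1 ≤ N) {D : ℝ} (hD : 0 ≤ D)
    (hcx : (x * cx) ^ 2 ≤ D * N) {r : ℕ} (hr : r = 1 ∨ r = 2) :
    (∫ t in Set.Ioi (0:ℝ), |t - 1| ^ r * ‖(((N : ℂ) + Complex.I * x * cx) ^ (N + 1)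
        / (N.factorial : ℂ)) * (t : ℂ) ^ N * Complex.exp (-((N : ℂ) + Complex.I * x * cx) * t)‖)
      ≤ 3 * Real.exp (2 * D) * (N : ℝ) ^ (-(r : ℝ) / 2) := by
  set S := ‖(N : ℂ) + Complex.I * x * cx‖ with hSdef
  have hb : (0:ℝ) < N := by exact_mod_cast hN
  have hn1 : (1:ℝ) ≤ N := by exact_mod_cast hN
  have hS2 : S ^ 2 = (N : ℝ) ^ 2 + (x * cx) ^ 2 := pw_sq x cx N
  have hfac : (S / N) ^ (N + 1) ≤ Real.exp (2 * D) := by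
    refine pw_factor hN hD (norm_nonneg _) ?_ ?_
    · rw [hS2]; linarith
    · rw [hS2]; nlinarith [sq_nonneg (x * cx)]
  have hA : S ^ (N + 1) / (N.factorial : ℝ) * ((N.factorial : ℝ) / (N : ℝ) ^ (N + 1))
      = (S / N) ^ (N + 1) := by
    rw [div_pow]
    field_simp
  have hcong : (∫ t in Set.Ioi (0:ℝ), |t - 1| ^ r *
        ‖(((N : ℂ) + Complex.I * x * cx) ^ (N + 1) / (N.factorial : ℂ))
          * (t : ℂ) ^ N * Complex.exp (-((N : ℂ) + Complex.I * x * cx) * t)‖)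
      = S ^ (N + 1) / (N.factorial : ℝ)
        * ∫ t in Set.Ioi (0:ℝ), |t - 1| ^ r * (t ^ N * Real.exp (-(N * t))) := by
    rw [← MeasureTheory.integral_const_mul]
    refine setIntegral_congr_fun measurableSet_Ioi fun t ht => ?_
    rw [pw_abs x cx t N ht]
    ring
  rw [hcong]
  have hSA : (0:ℝ) ≤ S ^ (N + 1) / (N.factorial : ℝ) := by positivity
  rcases hr with hr | hr <;> subst hr
  · -- r = 1
    have h1 := pw_moment1 N hN
    have hs : 0 < Real.sqrt N := Real.sqrt_pos.2 hb
    have hrp : (N : ℝ) ^ (-(1:ℕ) / 2 : ℝ) = (Real.sqrt N)⁻¹ := by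
      rw [Real.sqrt_eq_rpow, ← Real.rpow_neg hb.le]
      norm_num
    calc S ^ (N + 1) / (N.factorial : ℝ)
          * ∫ t in Set.Ioi (0:ℝ), |t - 1| ^ 1 * (t ^ N * Real.exp (-(N * t)))
        ≤ S ^ (N + 1) / (N.factorial : ℝ)
          * (((N.factorial : ℝ) / (N : ℝ) ^ (N + 1)) * (2 / Real.sqrt N)) := by
          refine mul_le_mul_of_nonneg_left ?_ hSA
          simpa [pow_one] using h1
      _ = (S / N) ^ (N + 1) * (2 / Real.sqrt N) := by rw [← hA]; ring
      _ ≤ Real.exp (2 * D) * (2 / Real.sqrt N) :=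
          mul_le_mul_of_nonneg_right hfac (by positivity)
      _ ≤ 3 * Real.exp (2 * D) * (N : ℝ) ^ (-(1:ℕ) / 2 : ℝ) := by
          rw [hrp]
          rw [div_eq_mul_inv]
          have he : 0 < Real.exp (2 * D) := Real.exp_pos _
          nlinarith [mul_pos he (inv_pos.2 hs)]
  · -- r = 2
    have hcong2 : (∫ t in Set.Ioi (0:ℝ), |t - 1| ^ 2 * (t ^ N * Real.exp (-(N * t))))
        = ∫ t in Set.Ioi (0:ℝ), (t - 1) ^ 2 * (t ^ N * Real.exp (-(N * t))) := by
      refine setIntegral_congr_fun measurableSet_Ioi fun t _ => ?_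
      rw [sq_abs]
    have hrp : (N : ℝ) ^ (-(2:ℕ) / 2 : ℝ) = ((N : ℝ))⁻¹ := by
      rw [show (-(2:ℕ) / 2 : ℝ) = -1 by norm_num, Real.rpow_neg_one]
    calc S ^ (N + 1) / (N.factorial : ℝ)
          * ∫ t in Set.Ioi (0:ℝ), |t - 1| ^ 2 * (t ^ N * Real.exp (-(N * t)))
        = (S / N) ^ (N + 1) * (((N : ℝ) + 2) / (N : ℝ) ^ 2) := by
          rw [hcong2, pw_moment2 N hN, ← hA]; ring
      _ ≤ Real.exp (2 * D) * (3 * ((N : ℝ))⁻¹) := by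
          refine mul_le_mul hfac ?_ (by positivity) (Real.exp_pos _).le
          rw [div_le_iff₀ (by positivity)]
          have : 3 * ((N:ℝ))⁻¹ * (N:ℝ)^2 = 3 * ((N:ℝ) * ((N:ℝ)⁻¹ * (N:ℝ))) := by ring
          rw [this, inv_mul_cancel₀ hb.ne', mul_one]
          nlinarith
      _ = 3 * Real.exp (2 * D) * ((N : ℝ))⁻¹ := by ring
      _ = 3 * Real.exp (2 * D) * (N : ℝ) ^ (-(2:ℕ) / 2 : ℝ) := by rw [hrp]

/-- moment bounds `∫₀^∞ |t-1|^r |K_N(t,x)| dt ≤ C_{r,x} N^{-r/2}`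
for `r ∈ {1,2}` for the generalized Post-Widder kernel. -/
theorem stmt_13 (x : ℝ) (hx : 0 < x) (c : ℝ → ℝ)
    (hc : Filter.IsBoundedUnder (· ≤ ·) Filter.atTop (fun y => c y ^ 2 / y))
    (K : ℕ → ℝ → ℂ)
    (hK : ∀ (N : ℕ) (t : ℝ), K N t =
      (((N : ℂ) + Complex.I * x * c (N / x)) ^ (N + 1) / (Nat.factorial N : ℂ)) *
        (t : ℂ) ^ N * Complex.exp (-((N : ℂ) + Complex.I * x * c (N / x)) * t)) :
    ∀ r ∈ ({1, 2} : Set ℕ), ∃ C : ℝ, ∀ N : ℕ, 1 ≤ N →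
      (∫ t in Set.Ioi (0 : ℝ), |t - 1| ^ r * ‖K N t‖) ≤
        C * (N : ℝ) ^ (-(r : ℝ) / 2) := by
  intro r hr
  have hrc : r = 1 ∨ r = 2 := by simpa using hr
  obtain ⟨B, hB⟩ := hc
  rw [Filter.eventually_map] at hB
  obtain ⟨y₀, hy₀⟩ := eventually_atTop.1 hB
  set D := max B 0 * x with hDdef
  have hD : 0 ≤ D := mul_nonneg (le_max_right _ _) hx.le
  refine pw_wrap (fun N hN => Real.rpow_pos_of_pos (by exact_mod_cast hN) _)
    ⟨3 * Real.exp (2 * D), ?_⟩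
  filter_upwards [eventually_ge_atTop (max 1 ⌈x * y₀⌉₊)] with N hge
  have hN : 1 ≤ N := le_trans (le_max_left _ _) hge
  have hb : (0:ℝ) < N := by exact_mod_cast hN
  have hxy : x * y₀ ≤ (N : ℝ) := by
    have := le_trans (le_max_right 1 ⌈x * y₀⌉₊) hge
    exact (Nat.ceil_le.1 this)
  have hy : y₀ ≤ (N : ℝ) / x := by
    rw [le_div_iff₀ hx]
    linarith [hxy]
  have hcN := hy₀ _ hy
  have hdiv : (0:ℝ) < (N : ℝ) / x := div_pos hb hx
  have hc2 : c ((N : ℝ) / x) ^ 2 ≤ max B 0 * ((N : ℝ) / x) := by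
    have h1 : c ((N : ℝ) / x) ^ 2 ≤ B * ((N : ℝ) / x) := (div_le_iff₀ hdiv).1 hcN
    have h2 : B * ((N : ℝ) / x) ≤ max B 0 * ((N : ℝ) / x) :=
      mul_le_mul_of_nonneg_right (le_max_left _ _) hdiv.le
    linarith
  have hcx : (x * c ((N : ℝ) / x)) ^ 2 ≤ D * N := by
    have h3 : x ^ 2 * (max B 0 * ((N : ℝ) / x)) = D * N := by
      field_simp [hDdef]
      ring
    calc (x * c ((N : ℝ) / x)) ^ 2 = x ^ 2 * c ((N : ℝ) / x) ^ 2 := by ring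
      _ ≤ x ^ 2 * (max B 0 * ((N : ℝ) / x)) :=
          mul_le_mul_of_nonneg_left hc2 (sq_nonneg x)
      _ = D * N := h3
  simp only [hK]
  exact_mod_cast pw_main x (c ((N : ℝ) / x)) N hN hD hcx hrc
end
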